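/- Let E₀ ⊆ E be fields, G a group, and V, V' finite-dimensional representations of G over E₀. Assume that the base changes E ⊗_{E₀} V and E ⊗_{E₀} V' are irreducible representations of G over E and are isomorphic as representations of G over E. Then V and V' are isomorphic as representations of G over E₀. In particular, an E₀-model of an absolutely irreducible representation of G over E is unique up to isomorphism if it exists. -/

import Mathlib

open scoped TensorProduct

/-- A representation is irreducible if the space is nonzero and the only invariant
subspaces are `⊥` and `⊤`. -/
def IsIrredRep {k G V : Type*} [CommSemiring k] [Monoid G] [AddCommMonoid V] [Module k V]
    (ρ : Representation k G V) : Prop :=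
  Nontrivial V ∧ ∀ W : Submodule k V, (∀ g : G, ∀ v ∈ W, ρ g v ∈ W) → W = ⊥ ∨ W = ⊤

/-- Base change of a representation along a commutative-ring extension `E → F`. -/
noncomputable def repBaseChange {E G V : Type*} [CommSemiring E] [Monoid G]
    [AddCommMonoid V] [Module E V] (F : Type*) [CommSemiring F] [Algebra E F]
    (ρ : Representation E G V) : Representation F G (F ⊗[E] V) :=
  (Module.End.baseChangeHom E F V).toRingHom.toMonoidHom.comp ρ

/-- For a nonzero element of `E ⊗[E₀] V`, some coefficient functional is nonzero on it. -/
lemma exists_functional_ne_zero {E₀ E V : Type*} [Field E₀] [Field E] [Algebra E₀ E]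
    [AddCommGroup V] [Module E₀ V] {t : E ⊗[E₀] V} (ht : t ≠ 0) :
    ∃ φ : E →ₗ[E₀] E₀,
      (TensorProduct.lid E₀ V).toLinearMap.comp (LinearMap.rTensor V φ) t ≠ 0 := by
  classical
  let b := Module.Basis.ofVectorSpace E₀ E
  let L : (E ⊗[E₀] V) ≃ₗ[E₀] (_ →₀ V) :=
    (TensorProduct.congr b.repr (LinearEquiv.refl E₀ V)).trans
      (TensorProduct.finsuppScalarLeft E₀ V _)
  have hL : L t ≠ 0 := fun h => ht (by simpa using congrArg L.symm h)
  obtain ⟨i, hi⟩ := Finsupp.ne_iff.mp hL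
  refine ⟨b.coord i, ?_⟩
  have key : (TensorProduct.lid E₀ V).toLinearMap.comp (LinearMap.rTensor V (b.coord i))
      = (Finsupp.lapply i).comp (L : (E ⊗[E₀] V) →ₗ[E₀] (_ →₀ V)) := by
    apply TensorProduct.ext'
    intro x v
    simp [L, TensorProduct.finsuppScalarLeft_apply_tmul_apply, Module.Basis.coord_apply]
  rw [key]
  simpa using hi

/-- `1 ⊗ v ≠ 0` for `v ≠ 0`. -/
lemma one_tmul_ne_zero {E₀ E V : Type*} [Field E₀] [Field E] [Algebra E₀ E]
    [AddCommGroup V] [Module E₀ V] {v : V} (hv : v ≠ 0) :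
    (1 : E) ⊗ₜ[E₀] v ≠ 0 := by
  obtain ⟨φ, hφ1⟩ : ∃ φ : E →ₗ[E₀] E₀, φ 1 ≠ 0 := by
    by_contra h
    push_neg at h
    have := (Module.forall_dual_apply_eq_zero_iff E₀ (1 : E)).mp h
    exact one_ne_zero this
  intro h
  have : (TensorProduct.lid E₀ V).toLinearMap.comp (LinearMap.rTensor V φ)
      ((1 : E) ⊗ₜ[E₀] v) = φ 1 • v := by simp
  rw [h] at this
  simp only [map_zero] at this
  exact hv (by simpa [hφ1] using (smul_eq_zero.mp this.symm).resolve_left hφ1)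

/-- Descent of irreducibility along base change. -/
lemma descend_irred {E₀ E G W : Type*} [Field E₀] [Field E] [Algebra E₀ E] [Group G]
    [AddCommGroup W] [Module E₀ W] [FiniteDimensional E₀ W]
    (σ : Representation E₀ G W) (h : IsIrredRep (repBaseChange E σ))
    (p : Submodule E₀ W) (hp : ∀ g, ∀ w ∈ p, σ g w ∈ p) : p = ⊥ ∨ p = ⊤ := by
  have hinv : ∀ g : G, ∀ x ∈ p.baseChange E, repBaseChange E σ g x ∈ p.baseChange E := by
    intro g x hx
    have : (p.baseChange E).map (repBaseChange E σ g) ≤ p.baseChange E := by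
      rw [Submodule.map_le_iff_le_comap, Submodule.baseChange_eq_span, Submodule.span_le,
        ← Submodule.baseChange_eq_span]
      rintro - ⟨w, hw, rfl⟩
      have : repBaseChange E σ g ((1:E) ⊗ₜ[E₀] w) = (1:E) ⊗ₜ[E₀] σ g w := rfl
      exact Submodule.mem_comap.mpr (by
        rw [show (TensorProduct.mk E₀ E W 1) w = (1:E) ⊗ₜ[E₀] w from rfl, this]
        exact Submodule.tmul_mem_baseChange_of_mem 1 (hp g w hw))
    exact this (Submodule.mem_map_of_mem hx)
  rcases h.2 (p.baseChange E) hinv with hb | hb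
  · left
    rw [Submodule.eq_bot_iff]
    intro w hw
    by_contra hw0
    exact one_tmul_ne_zero (E := E) hw0
      (by simpa [Submodule.mem_bot] using hb ▸ Submodule.tmul_mem_baseChange_of_mem (1:E) hw)
  · right
    have hrange : LinearMap.range (p.subtype.baseChange E) = p.baseChange E := by
      apply le_antisymm
      · rintro - ⟨x, rfl⟩
        induction x using TensorProduct.induction_on with
        | zero => simp
        | tmul a w => exact Submodule.tmul_mem_baseChange_of_mem a w.2
        | add x y hx hy => rw [map_add]; exact Submodule.add_mem _ hx hy
      · rw [Submodule.baseChange_eq_span, Submodule.span_le]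
        rintro - ⟨w, hw, rfl⟩
        exact ⟨(1:E) ⊗ₜ[E₀] ⟨w, hw⟩, rfl⟩
    have hinj : Function.Injective (p.subtype.baseChange E) := by
      rw [LinearMap.baseChange_eq_ltensor]
      exact Module.Flat.lTensor_preserves_injective_linearMap _ p.injective_subtype
    have h1 : Module.finrank E₀ p = Module.finrank E₀ W := by
      have e1 : Module.finrank E (LinearMap.range (p.subtype.baseChange E))
          = Module.finrank E (E ⊗[E₀] p) := LinearMap.finrank_range_of_inj hinj
      rw [hrange, hb] at e1
      have e2 : Module.finrank E (⊤ : Submodule E (E ⊗[E₀] W))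
          = Module.finrank E (E ⊗[E₀] W) := finrank_top E _
      rw [e2, Module.finrank_baseChange, Module.finrank_baseChange] at e1
      exact e1.symm
    exact Submodule.eq_top_of_finrank_eq h1

/-- The coefficient projections `E ⊗ V → V` are `G`-equivariant. -/
lemma proj_equivariant {E₀ E G V : Type*} [Field E₀] [Field E] [Algebra E₀ E] [Group G]
    [AddCommGroup V] [Module E₀ V] (ρ : Representation E₀ G V) (φ : E →ₗ[E₀] E₀)
    (g : G) (t : E ⊗[E₀] V) :
    (TensorProduct.lid E₀ V).toLinearMap.comp (LinearMap.rTensor V φ)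
        (repBaseChange E ρ g t)
      = ρ g ((TensorProduct.lid E₀ V).toLinearMap.comp (LinearMap.rTensor V φ) t) := by
  induction t using TensorProduct.induction_on with
  | zero => simp
  | tmul x v =>
      have : repBaseChange E ρ g (x ⊗ₜ[E₀] v) = x ⊗ₜ[E₀] (ρ g v) := rfl
      rw [this]; simp
  | add x y hx hy => rw [map_add, map_add, map_add, hx, hy, map_add]

/-- if the base changes to `E ⊇ E₀` of two finite-dimensional
representations of `G` over `E₀` are irreducible and `G`-isomorphic over `E`, then the
representations are already isomorphic over `E₀`.  In particular an `E₀`-model of an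
absolutely irreducible representation over `E` is unique up to isomorphism. -/
theorem stmt_2 {E₀ E G V V' : Type*} [Field E₀] [Field E] [Algebra E₀ E] [Group G]
    [AddCommGroup V] [Module E₀ V] [FiniteDimensional E₀ V]
    [AddCommGroup V'] [Module E₀ V'] [FiniteDimensional E₀ V']
    (ρ : Representation E₀ G V) (ρ' : Representation E₀ G V')
    (hirr : IsIrredRep (repBaseChange E ρ))
    (hirr' : IsIrredRep (repBaseChange E ρ'))
    (hiso : ∃ f : (E ⊗[E₀] V) ≃ₗ[E] (E ⊗[E₀] V'),
      ∀ (g : G) (x : E ⊗[E₀] V), f (repBaseChange E ρ g x) = repBaseChange E ρ' g (f x)) :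
    ∃ f : V ≃ₗ[E₀] V', ∀ (g : G) (v : V), f (ρ g v) = ρ' g (f v) := by
  obtain ⟨f, hf⟩ := hiso
  have hV : Nontrivial V := by
    by_contra h
    have : Subsingleton V := not_nontrivial_iff_subsingleton.mp h
    have : Subsingleton (E ⊗[E₀] V) := by infer_instance
    exact (not_subsingleton_iff_nontrivial.mpr hirr.1) this
  obtain ⟨v₀, hv₀⟩ := exists_ne (0 : V)
  have ht : f ((1 : E) ⊗ₜ[E₀] v₀) ≠ 0 := by
    intro h
    exact one_tmul_ne_zero (E := E) hv₀ (f.map_eq_zero_iff.mp h)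
  obtain ⟨φ, hφ⟩ := exists_functional_ne_zero ht
  set P : (E ⊗[E₀] V') →ₗ[E₀] V' :=
    (TensorProduct.lid E₀ V').toLinearMap.comp (LinearMap.rTensor V' φ) with hP
  set f₀ : V →ₗ[E₀] V' :=
    P ∘ₗ (f.restrictScalars E₀ : (E ⊗[E₀] V) →ₗ[E₀] (E ⊗[E₀] V'))
      ∘ₗ (TensorProduct.mk E₀ E V) 1 with hf₀
  have hequiv : ∀ (g : G) (v : V), f₀ (ρ g v) = ρ' g (f₀ v) := by
    intro g v
    have h1 : (1 : E) ⊗ₜ[E₀] (ρ g v) = repBaseChange E ρ g ((1:E) ⊗ₜ[E₀] v) := rfl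
    calc f₀ (ρ g v) = P (f ((1:E) ⊗ₜ[E₀] (ρ g v))) := rfl
      _ = P (repBaseChange E ρ' g (f ((1:E) ⊗ₜ[E₀] v))) := by rw [h1, hf]
      _ = ρ' g (P (f ((1:E) ⊗ₜ[E₀] v))) := proj_equivariant ρ' φ g _
      _ = ρ' g (f₀ v) := rfl
  have hf₀v₀ : f₀ v₀ ≠ 0 := hφ
  have hker : LinearMap.ker f₀ = ⊥ := by
    rcases descend_irred ρ hirr (LinearMap.ker f₀)
        (fun g w hw => by
          simp only [LinearMap.mem_ker] at hw ⊢
          rw [hequiv g w, hw, map_zero]) with h | h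
    · exact h
    · exact absurd (h ▸ Submodule.mem_top) (fun hm => hf₀v₀ (LinearMap.mem_ker.mp hm))
  have hrange : LinearMap.range f₀ = ⊤ := by
    rcases descend_irred ρ' hirr' (LinearMap.range f₀)
        (fun g w hw => by
          obtain ⟨v, rfl⟩ := hw
          exact ⟨ρ g v, hequiv g v⟩) with h | h
    · exact absurd (h ▸ LinearMap.mem_range_self f₀ v₀) (fun hm => hf₀v₀ (by simpa using hm))
    · exact h
  refine ⟨LinearEquiv.ofBijective f₀
    ⟨LinearMap.ker_eq_bot.mp hker, LinearMap.range_eq_top.mp hrange⟩, hequiv⟩
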